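/- arXiv:1804.00059 — 3 statements merged into one kernel-verified Lean document; each statement's English description precedes it below -/
import Mathlib

section
/- Let f(z) = ωz + a₂z² + ⋯ ∈ G have compositional order n. Define f* = (1/n) Σ_{j=1}^{n} ω^{n-j} f⁽ʲ⁾ (coefficientwise sum of iterates scaled by powers of ω). Then f* belongs to G (its linear coefficient is nonzero) and f* ∘ f = ℓ_ω ∘ f*, where ℓ_ω(z) = ωz; consequently f* ∘ f ∘ (f*)⁻¹ = ℓ_ω. -/
open PowerSeries

/-- Composition (substitution) of formal power series: coefficient formula,
valid for `g` with zero constant term. -/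
noncomputable def PS.comp {F : Type*} [CommRing F] (f g : PowerSeries F) : PowerSeries F :=
  PowerSeries.mk fun k =>
    ∑ n ∈ Finset.range (k + 1), (PowerSeries.coeff n f) * (PowerSeries.coeff k (g ^ n))

/-- The group `G` of series with zero constant term and nonzero linear coefficient. -/
def PS.G (F : Type*) [CommRing F] : Set (PowerSeries F) :=
  {f | PowerSeries.constantCoeff f = 0 ∧ PowerSeries.coeff 1 f ≠ 0}

/-- `n`-fold compositional iterate of `f`. -/
noncomputable def PS.iter {F : Type*} [CommRing F] (f : PowerSeries F) : ℕ → PowerSeries F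
  | 0 => PowerSeries.X
  | n + 1 => PS.comp f (PS.iter f n)

/-- `f` has compositional order exactly `n`. -/
def PS.HasOrder {F : Type*} [CommRing F] (f : PowerSeries F) (n : ℕ) : Prop :=
  PS.iter f n = PowerSeries.X ∧ ∀ m, 0 < m → m < n → PS.iter f m ≠ PowerSeries.X

namespace PSAux
variable {F : Type*} [CommRing F]

lemma coeff_comp (f g : PowerSeries F) (k : ℕ) :
    coeff k (PS.comp f g) =
      ∑ n ∈ Finset.range (k + 1), coeff n f * coeff k (g ^ n) := by
  simp [PS.comp]

lemma coeff_pow_eq_zero {g : PowerSeries F} (hg : constantCoeff g = 0) :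
    ∀ {m k : ℕ}, k < m → coeff k (g ^ m) = 0 := by
  intro m
  induction m with
  | zero => intro k hk; omega
  | succ m ih =>
    intro k hk
    rw [pow_succ, coeff_mul]
    refine Finset.sum_eq_zero fun p hp => ?_
    rw [Finset.HasAntidiagonal.mem_antidiagonal] at hp
    rcases Nat.eq_zero_or_pos p.2 with h2 | h2
    · have : p.2 = 0 := h2
      rw [this, coeff_zero_eq_constantCoeff, hg, mul_zero]
    · rw [ih (by omega), zero_mul]

lemma constantCoeff_pow_eq_zero {g : PowerSeries F} (hg : constantCoeff g = 0)
    {m : ℕ} (hm : 0 < m) : coeff 0 (g ^ m) = 0 :=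
  coeff_pow_eq_zero hg hm

lemma coeff_aeval {h : PowerSeries F} (hh : constantCoeff h = 0) (P : Polynomial F) (k : ℕ) :
    coeff k (Polynomial.aeval h P) =
      ∑ n ∈ Finset.range (k + 1), P.coeff n * coeff k (h ^ n) := by
  rw [Polynomial.aeval_eq_sum_range, map_sum]
  have key : ∀ N, P.natDegree < N → k < N →
      ∑ n ∈ Finset.range N, coeff k (P.coeff n • h ^ n) =
        ∑ n ∈ Finset.range (k + 1), P.coeff n * coeff k (h ^ n) := by
    intro N h1 h2
    rw [← Finset.sum_subset (Finset.range_subset_range.mpr (by omega : k + 1 ≤ N))]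
    · exact Finset.sum_congr rfl fun n _ => by rw [coeff_smul, smul_eq_mul]
    · intro n hn hn'
      rw [Finset.mem_range] at hn
      rw [Finset.mem_range, not_lt] at hn'
      rw [coeff_smul, coeff_pow_eq_zero hh (by omega), smul_zero]
  calc ∑ n ∈ Finset.range (P.natDegree + 1), coeff k (P.coeff n • h ^ n)
      = ∑ n ∈ Finset.range (max (P.natDegree + 1) (k + 1)), coeff k (P.coeff n • h ^ n) := by
        refine Finset.sum_subset (Finset.range_subset_range.mpr (le_max_left _ _)) ?_
        intro n hn hn'
        rw [Finset.mem_range, not_lt] at hn'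
        rw [Polynomial.coeff_eq_zero_of_natDegree_lt (by omega), zero_smul, map_zero]
    _ = _ := key _ (by omega) (by omega)

theorem coeff_comp_eq_aeval {h : PowerSeries F} (hh : constantCoeff h = 0)
    (f : PowerSeries F) {k i : ℕ} (hik : i ≤ k) :
    coeff i (PS.comp f h) = coeff i (Polynomial.aeval h (trunc (k + 1) f)) := by
  rw [coeff_comp, coeff_aeval hh]
  refine Finset.sum_congr rfl fun n hn => ?_
  rw [Finset.mem_range] at hn
  rw [coeff_trunc, if_pos (by omega)]

theorem comp_mul {h : PowerSeries F} (hh : constantCoeff h = 0) (a b : PowerSeries F) :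
    PS.comp (a * b) h = PS.comp a h * PS.comp b h := by
  ext k
  have hmul : coeff k (PS.comp a h * PS.comp b h) =
      coeff k (Polynomial.aeval h (trunc (k + 1) a) * Polynomial.aeval h (trunc (k + 1) b)) := by
    rw [coeff_mul, coeff_mul]
    refine Finset.sum_congr rfl fun p hp => ?_
    rw [Finset.HasAntidiagonal.mem_antidiagonal] at hp
    rw [coeff_comp_eq_aeval hh a (show p.1 ≤ k by omega),
      coeff_comp_eq_aeval hh b (show p.2 ≤ k by omega)]
  rw [hmul, ← map_mul, coeff_aeval hh, coeff_comp]
  refine Finset.sum_congr rfl fun n hn => ?_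
  rw [Finset.mem_range] at hn
  congr 1
  rw [Polynomial.coeff_mul, coeff_mul]
  refine Finset.sum_congr rfl fun p hp => ?_
  rw [Finset.HasAntidiagonal.mem_antidiagonal] at hp
  rw [coeff_trunc, coeff_trunc, if_pos (by omega), if_pos (by omega)]

theorem comp_one (h : PowerSeries F) : PS.comp 1 h = 1 := by
  ext k
  rw [coeff_comp]
  rw [Finset.sum_eq_single 0]
  · simp
  · intro n hn hn0
    rw [coeff_one, if_neg hn0, zero_mul]
  · intro hk; simp at hk

theorem comp_pow {h : PowerSeries F} (hh : constantCoeff h = 0) (g : PowerSeries F) (m : ℕ) :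
    PS.comp (g ^ m) h = (PS.comp g h) ^ m := by
  induction m with
  | zero => simpa using comp_one h
  | succ m ih => rw [pow_succ, comp_mul hh, ih, pow_succ]

theorem comp_smul (c : F) (a h : PowerSeries F) :
    PS.comp (c • a) h = c • PS.comp a h := by
  ext k
  rw [coeff_smul, coeff_comp, coeff_comp, Finset.smul_sum]
  refine Finset.sum_congr rfl fun n _ => ?_
  rw [coeff_smul, smul_eq_mul, smul_eq_mul, mul_assoc]

theorem comp_sum {ι : Type*} (s : Finset ι) (u : ι → PowerSeries F) (h : PowerSeries F) :
    PS.comp (∑ j ∈ s, u j) h = ∑ j ∈ s, PS.comp (u j) h := by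
  ext k
  rw [coeff_comp, map_sum]
  have : ∀ n, coeff n (∑ j ∈ s, u j) = ∑ j ∈ s, coeff n (u j) := fun n => map_sum _ _ _
  calc ∑ n ∈ Finset.range (k + 1), coeff n (∑ j ∈ s, u j) * coeff k (h ^ n)
      = ∑ n ∈ Finset.range (k + 1), ∑ j ∈ s, coeff n (u j) * coeff k (h ^ n) := by
        refine Finset.sum_congr rfl fun n _ => ?_
        rw [this, Finset.sum_mul]
    _ = ∑ j ∈ s, ∑ n ∈ Finset.range (k + 1), coeff n (u j) * coeff k (h ^ n) :=
        Finset.sum_comm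
    _ = _ := Finset.sum_congr rfl fun j _ => (coeff_comp (u j) h k).symm

theorem comp_assoc {g h : PowerSeries F} (hg : constantCoeff g = 0)
    (hh : constantCoeff h = 0) (f : PowerSeries F) :
    PS.comp (PS.comp f g) h = PS.comp f (PS.comp g h) := by
  ext k
  rw [coeff_comp, coeff_comp]
  calc ∑ m ∈ Finset.range (k + 1), coeff m (PS.comp f g) * coeff k (h ^ m)
      = ∑ m ∈ Finset.range (k + 1), ∑ n ∈ Finset.range (k + 1),
          coeff n f * coeff m (g ^ n) * coeff k (h ^ m) := by
        refine Finset.sum_congr rfl fun m hm => ?_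
        rw [Finset.mem_range] at hm
        rw [coeff_comp, Finset.sum_mul]
        refine Finset.sum_subset (Finset.range_subset_range.mpr (by omega)) ?_
        intro n hn hn'
        rw [Finset.mem_range, not_lt] at hn'
        rw [coeff_pow_eq_zero hg (by omega : m < n), mul_zero, zero_mul]
    _ = ∑ n ∈ Finset.range (k + 1), ∑ m ∈ Finset.range (k + 1),
          coeff n f * coeff m (g ^ n) * coeff k (h ^ m) := Finset.sum_comm
    _ = ∑ n ∈ Finset.range (k + 1), coeff n f * coeff k ((PS.comp g h) ^ n) := by
        refine Finset.sum_congr rfl fun n _ => ?_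
        rw [← comp_pow hh g n, coeff_comp, Finset.mul_sum]
        exact Finset.sum_congr rfl fun m _ => by ring

theorem comp_X (f : PowerSeries F) : PS.comp f X = f := by
  ext k
  rw [coeff_comp]
  rw [Finset.sum_eq_single k]
  · rw [coeff_X_pow, if_pos rfl, mul_one]
  · intro n hn hnk
    rw [coeff_X_pow, if_neg (fun h => hnk h.symm), mul_zero]
  · intro h; simp at h

theorem X_comp {g : PowerSeries F} (hg : constantCoeff g = 0) : PS.comp X g = g := by
  ext k
  rw [coeff_comp]
  match k with
  | 0 => simpa using hg.symm
  | k + 1 =>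
    rw [Finset.sum_eq_single 1]
    · simp
    · intro n hn hn1
      rw [coeff_X, if_neg hn1, zero_mul]
    · intro h; simp at h

theorem constantCoeff_comp (f g : PowerSeries F) :
    coeff 0 (PS.comp f g) = coeff 0 f := by
  rw [coeff_comp]; simp

theorem coeff_one_comp (f g : PowerSeries F) :
    coeff 1 (PS.comp f g) = coeff 1 f * coeff 1 g := by
  rw [coeff_comp, Finset.sum_range_succ, Finset.sum_range_one]
  simp

theorem C_mul_X_comp {g : PowerSeries F} (hg : constantCoeff g = 0) (c : F) :
    PS.comp (PowerSeries.C c * X) g = PowerSeries.C c * g := by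
  ext k
  rw [coeff_comp]
  match k with
  | 0 =>
    simp only [coeff_zero_eq_constantCoeff, map_mul, hg, mul_zero]
    simp
  | k + 1 =>
    rw [Finset.sum_eq_single 1]
    · simp
    · intro n hn hn1
      rw [coeff_C_mul, coeff_X, if_neg hn1, mul_zero, zero_mul]
    · intro h; simp at h


/-- coefficients below `k` determine all coefficients below `k` of powers -/
lemma coeff_pow_congr_lt {g g' : PowerSeries F} {k : ℕ}
    (hagree : ∀ i < k, coeff i g = coeff i g') :
    ∀ m, ∀ i < k, coeff i (g ^ m) = coeff i (g' ^ m) := by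
  intro m
  induction m with
  | zero => intro i _; rfl
  | succ m ih =>
    intro i hi
    rw [pow_succ, pow_succ, coeff_mul, coeff_mul]
    refine Finset.sum_congr rfl fun p hp => ?_
    rw [Finset.HasAntidiagonal.mem_antidiagonal] at hp
    rw [ih p.1 (by omega), hagree p.2 (by omega)]

lemma coeff_pow_congr {g g' : PowerSeries F} (hg : constantCoeff g = 0)
    (hg' : constantCoeff g' = 0) {k : ℕ}
    (hagree : ∀ i < k, coeff i g = coeff i g') {m : ℕ} (hm : 2 ≤ m) :
    coeff k (g ^ m) = coeff k (g' ^ m) := by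
  obtain ⟨m', rfl⟩ : ∃ m', m = m' + 1 := ⟨m - 1, by omega⟩
  rw [pow_succ, pow_succ, coeff_mul, coeff_mul]
  refine Finset.sum_congr rfl fun p hp => ?_
  rw [Finset.HasAntidiagonal.mem_antidiagonal] at hp
  rcases Nat.eq_zero_or_pos p.2 with h2 | h2
  · rw [h2, coeff_zero_eq_constantCoeff, hg, hg', mul_zero, mul_zero]
  rcases Nat.eq_zero_or_pos p.1 with h3 | h3
  · rw [h3, coeff_pow_eq_zero hg (by omega : (0:ℕ) < m'),
      coeff_pow_eq_zero hg' (by omega : (0:ℕ) < m'), zero_mul, zero_mul]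
  · rw [coeff_pow_congr_lt hagree m' p.1 (by omega), hagree p.2 (by omega)]

end PSAux

section Inv
variable {F : Type*} [Field F]

noncomputable def icoef (u : PowerSeries F) : ℕ → F
  | 0 => 0
  | 1 => (coeff 1 u)⁻¹
  | (k+2) => -(coeff 1 u)⁻¹ *
      ∑ m ∈ Finset.Icc 2 (k+2), coeff m u *
        coeff (k+2) ((PowerSeries.mk fun i => if h : i < k + 2 then icoef u i else 0) ^ m)

theorem right_inv {u : PowerSeries F} (h0 : constantCoeff u = 0)
    (h1 : coeff 1 u ≠ 0) :
    ∃ g : PowerSeries F, constantCoeff g = 0 ∧ coeff 1 g = (coeff 1 u)⁻¹ ∧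
      PS.comp u g = X := by
  set g : PowerSeries F := PowerSeries.mk (icoef u) with hgdef
  have hg0 : constantCoeff g = 0 := by
    rw [← coeff_zero_eq_constantCoeff, hgdef, coeff_mk, icoef]
  have hg1 : coeff 1 g = (coeff 1 u)⁻¹ := by rw [hgdef, coeff_mk, icoef]
  refine ⟨g, hg0, hg1, ?_⟩
  ext k
  match k with
  | 0 =>
    rw [PSAux.coeff_comp]
    simp [coeff_zero_eq_constantCoeff, h0]
  | 1 =>
    rw [PSAux.coeff_comp, Finset.sum_range_succ, Finset.sum_range_one]
    simp [hg1, h1, coeff_X]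
  | k + 2 =>
    set t : PowerSeries F := PowerSeries.mk fun i => if h : i < k + 2 then icoef u i else 0
      with htdef
    have ht0 : constantCoeff t = 0 := by
      rw [← coeff_zero_eq_constantCoeff, htdef, coeff_mk, dif_pos (by omega), icoef]
    have hagree : ∀ i < k + 2, coeff i t = coeff i g := by
      intro i hi
      rw [htdef, hgdef, coeff_mk, coeff_mk, dif_pos hi]
    have hpow : ∀ m, 2 ≤ m → coeff (k+2) (t ^ m) = coeff (k+2) (g ^ m) :=
      fun m hm => PSAux.coeff_pow_congr ht0 hg0 hagree hm
    have hbk : coeff (k+2) g = -(coeff 1 u)⁻¹ *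
        ∑ m ∈ Finset.Icc 2 (k+2), coeff m u * coeff (k+2) (g ^ m) := by
      rw [hgdef, coeff_mk, icoef]
      congr 1
      exact Finset.sum_congr rfl fun m hm => by
        rw [hpow m (Finset.mem_Icc.mp hm).1]
    rw [PSAux.coeff_comp]
    have hsplit : ∑ n ∈ Finset.range (k + 2 + 1), coeff n u * coeff (k+2) (g ^ n) =
        coeff 0 u * coeff (k+2) (g ^ 0) + coeff 1 u * coeff (k+2) (g ^ 1) +
          ∑ n ∈ Finset.Icc 2 (k+2), coeff n u * coeff (k+2) (g ^ n) := by
      rw [Finset.range_eq_Ico, Finset.sum_eq_sum_Ico_succ_bot (by omega),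
        Finset.sum_eq_sum_Ico_succ_bot (by omega)]
      norm_num [Finset.Ico_add_one_right_eq_Icc]
    rw [hsplit]
    rw [pow_zero, coeff_one, if_neg (by omega), mul_zero, pow_one, hbk]
    rw [coeff_X, if_neg (by omega)]
    field_simp
    ring
end Inv

open PSAux in
theorem stmt_5 (F : Type*) [Field F] [CharZero F] (f : PowerSeries F) (hf : f ∈ PS.G F)
    (n : ℕ) (hn : 0 < n) (hord : PS.HasOrder f n)
    (ω : F) (hω : PowerSeries.coeff 1 f = ω)
    (fstar : PowerSeries F)
    (hstar : fstar = (n : F)⁻¹ • ∑ j ∈ Finset.range n, ω ^ (n - 1 - j) • PS.iter f (j + 1)) :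
    fstar ∈ PS.G F ∧
    PS.comp fstar f = PS.comp (PowerSeries.C ω * PowerSeries.X) fstar ∧
    ∃ finv ∈ PS.G F, PS.comp fstar finv = PowerSeries.X ∧
      PS.comp finv fstar = PowerSeries.X ∧
      PS.comp (PS.comp fstar f) finv = PowerSeries.C ω * PowerSeries.X := by
  obtain ⟨hf0, hf1⟩ := hf
  have hnF : (n : F) ≠ 0 := Nat.cast_ne_zero.mpr (by omega)
  -- basic facts about iterates
  have hc_iter : ∀ m, constantCoeff (PS.iter f m) = 0 := by
    intro m
    induction m with
    | zero => exact constantCoeff_X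
    | succ m _ =>
      show constantCoeff (PS.comp f (PS.iter f m)) = 0
      rw [← coeff_zero_eq_constantCoeff, constantCoeff_comp, coeff_zero_eq_constantCoeff, hf0]
  have h1_iter : ∀ m, coeff 1 (PS.iter f m) = ω ^ m := by
    intro m
    induction m with
    | zero =>
      show coeff 1 (X : PowerSeries F) = ω ^ 0
      simp
    | succ m ih =>
      show coeff 1 (PS.comp f (PS.iter f m)) = ω ^ (m + 1)
      rw [coeff_one_comp, hω, ih, pow_succ']
  have hωn : ω ^ n = 1 := by
    have := congrArg (coeff 1) hord.1
    rwa [h1_iter, coeff_one_X] at this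
  have iter_succ' : ∀ m, PS.iter f (m + 1) = PS.comp (PS.iter f m) f := by
    intro m
    induction m with
    | zero =>
      show PS.comp f (PS.iter f 0) = PS.comp X f
      rw [show PS.iter f 0 = X from rfl, comp_X, X_comp hf0]
    | succ m ih =>
      show PS.comp f (PS.iter f (m + 1)) = PS.comp (PS.iter f (m + 1)) f
      conv_lhs => rw [ih]
      rw [← comp_assoc (hc_iter m) hf0 f]
      rfl
  have hfn1 : PS.iter f (n + 1) = f := by
    show PS.comp f (PS.iter f n) = f
    rw [hord.1, comp_X]
  -- fstar ∈ G
  have hfstar0 : constantCoeff fstar = 0 := by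
    rw [hstar, ← coeff_zero_eq_constantCoeff, coeff_smul, map_sum]
    have : ∀ j ∈ Finset.range n, coeff 0 (ω ^ (n - 1 - j) • PS.iter f (j + 1)) = 0 := by
      intro j _
      rw [coeff_smul, coeff_zero_eq_constantCoeff, hc_iter, smul_zero]
    rw [Finset.sum_congr rfl this, Finset.sum_const_zero, smul_zero]
  have hfstar1 : coeff 1 fstar = 1 := by
    rw [hstar, coeff_smul, map_sum]
    have : ∀ j ∈ Finset.range n, coeff 1 (ω ^ (n - 1 - j) • PS.iter f (j + 1)) = 1 := by
      intro j hj
      rw [Finset.mem_range] at hj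
      rw [coeff_smul, h1_iter, smul_eq_mul, ← pow_add]
      rw [show n - 1 - j + (j + 1) = n by omega, hωn]
    rw [Finset.sum_congr rfl this, Finset.sum_const, Finset.card_range, nsmul_eq_mul, mul_one,
      smul_eq_mul, inv_mul_cancel₀ hnF]
  have hfstarG : fstar ∈ PS.G F := ⟨hfstar0, by rw [hfstar1]; exact one_ne_zero⟩
  -- part 2
  set gfun : ℕ → PowerSeries F := fun j => ω ^ (n - j) • PS.iter f (j + 1) with hgfun
  have hiter1 : PS.iter f 1 = f := by
    show PS.comp f (PS.iter f 0) = f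
    rw [show PS.iter f 0 = X from rfl, comp_X]
  have hg0n : gfun 0 = gfun n := by
    show ω ^ (n - 0) • PS.iter f (0 + 1) = ω ^ (n - n) • PS.iter f (n + 1)
    rw [Nat.sub_zero, Nat.sub_self, pow_zero, hωn, one_smul, one_smul, hfn1, zero_add, hiter1]
  have key : PS.comp fstar f = PS.comp (PowerSeries.C ω * X) fstar := by
    rw [C_mul_X_comp hfstar0, ← smul_eq_C_mul]
    rw [hstar, comp_smul, comp_sum, smul_comm]
    congr 1
    rw [Finset.smul_sum]
    have lhs : ∀ j ∈ Finset.range n,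
        PS.comp (ω ^ (n - 1 - j) • PS.iter f (j + 1)) f = gfun (j + 1) := by
      intro j _
      rw [comp_smul, ← iter_succ' (j + 1), hgfun]
      congr 2
      omega
    have rhs : ∀ j ∈ Finset.range n,
        ω • (ω ^ (n - 1 - j) • PS.iter f (j + 1)) = gfun j := by
      intro j hj
      rw [Finset.mem_range] at hj
      rw [smul_smul, hgfun, ← pow_succ', show n - 1 - j + 1 = n - j by omega]
    rw [Finset.sum_congr rfl lhs, Finset.sum_congr rfl rhs]
    have e1 := Finset.sum_range_succ' gfun n
    have e2 := Finset.sum_range_succ gfun n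
    have : (∑ j ∈ Finset.range n, gfun (j + 1)) + gfun 0 =
        (∑ j ∈ Finset.range n, gfun j) + gfun 0 := by
      rw [← e1, e2, hg0n]
    exact add_right_cancel this
  refine ⟨hfstarG, key, ?_⟩
  -- part 3
  obtain ⟨g, hg0, hg1, hug⟩ := right_inv hfstar0 (by rw [hfstar1]; exact one_ne_zero)
  have hg1ne : coeff 1 g ≠ 0 := by rw [hg1]; exact inv_ne_zero (by rw [hfstar1]; exact one_ne_zero)
  obtain ⟨h, hh0, _, hgh⟩ := right_inv hg0 hg1ne
  have hhf : h = fstar := by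
    calc h = PS.comp X h := (X_comp hh0).symm
      _ = PS.comp (PS.comp fstar g) h := by rw [hug]
      _ = PS.comp fstar (PS.comp g h) := comp_assoc hg0 hh0 fstar
      _ = PS.comp fstar X := by rw [hgh]
      _ = fstar := comp_X fstar
  rw [hhf] at hgh
  refine ⟨g, ⟨hg0, hg1ne⟩, hug, hgh, ?_⟩
  rw [key, comp_assoc hfstar0 hg0, hug, comp_X]
end

section
/- Let f ∈ G have compositional order n with linear coefficient ω, and let f* = (1/n) Σ_{j=1}^{n} ω^{n-j} f⁽ʲ⁾. For g ∈ G, one has g ∘ f ∘ g⁻¹ = ℓ_ω if and only if there exists h ∈ G of the form h(z) = Σ_{j≥0} h_{nj+1} z^{nj+1} such that g = h ∘ f*. -/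
open PowerSeries

open Finset

namespace PS
variable {F : Type*} [CommRing F]

theorem coeff_comp (f g : PowerSeries F) (k : ℕ) :
    coeff k (comp f g) = ∑ n ∈ range (k+1), coeff n f * coeff k (g ^ n) := by
  simp [comp]

theorem comp_X (f : PowerSeries F) : comp f X = f := by
  ext k
  rw [coeff_comp]
  rw [Finset.sum_eq_single k]
  · simp [PowerSeries.coeff_X_pow]
  · intro b _ hb
    simp [PowerSeries.coeff_X_pow, Ne.symm hb]
  · intro h; simp at h

theorem coeff_mul_vanish {u v : PowerSeries F} {s t : ℕ}
    (hu : ∀ i < s, coeff i u = 0) (hv : ∀ i < t, coeff i v = 0) :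
    ∀ m, m < s + t → coeff m (u * v) = 0 := by
  intro m hm
  rw [PowerSeries.coeff_mul]
  apply Finset.sum_eq_zero
  rintro ⟨a, b⟩ hab
  rw [Finset.HasAntidiagonal.mem_antidiagonal] at hab
  rcases lt_or_ge a s with h | h
  · simp [hu a h]
  · have : b < t := by omega
    simp [hv b this]

theorem coeff_pow_vanish {g : PowerSeries F} (hg : constantCoeff g = 0) :
    ∀ n, ∀ m < n, coeff m (g ^ n) = 0 := by
  intro n
  induction n with
  | zero => omega
  | succ n ih =>
    intro m hm
    rw [pow_succ]
    refine coeff_mul_vanish (s := n) (t := 1) ih ?_ m (by omega)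
    intro i hi
    interval_cases i
    simpa using hg

theorem X_comp {g : PowerSeries F} (hg : constantCoeff g = 0) : comp X g = g := by
  ext k
  rw [coeff_comp]
  rcases Nat.eq_zero_or_pos k with rfl | hk
  · simpa using hg.symm
  · rw [Finset.sum_eq_single 1]
    · simp
    · intro b _ hb
      rcases Nat.eq_zero_or_pos b with rfl | hb2
      · simp
      · rw [PowerSeries.coeff_X b, if_neg (by omega)]; ring
    · intro h; simp at h; omega

theorem constantCoeff_comp (f g : PowerSeries F) :
    constantCoeff (comp f g) = constantCoeff f := by
  have := coeff_comp f g 0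
  simpa using this

theorem coeff_one_comp (f g : PowerSeries F) :
    coeff 1 (comp f g) = coeff 1 f * coeff 1 g := by
  rw [coeff_comp]
  rw [Finset.sum_range_succ, Finset.sum_range_succ]
  simp

theorem add_comp (f g h : PowerSeries F) : comp (f + g) h = comp f h + comp g h := by
  ext k
  simp [coeff_comp, add_mul, Finset.sum_add_distrib]

theorem smul_comp (a : F) (f h : PowerSeries F) : comp (a • f) h = a • comp f h := by
  ext k
  simp [coeff_comp, Finset.mul_sum, mul_assoc]

theorem sum_comp {α : Type*} (s : Finset α) (f : α → PowerSeries F) (h : PowerSeries F) :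
    comp (∑ j ∈ s, f j) h = ∑ j ∈ s, comp (f j) h := by
  classical
  induction s using Finset.induction_on with
  | empty =>
    ext k; simp [coeff_comp]
  | insert a s hx ih =>
    rw [Finset.sum_insert hx, add_comp, ih, Finset.sum_insert hx]


theorem coeff_comp_stable {h : PowerSeries F} (h0 : constantCoeff h = 0)
    (f : PowerSeries F) {k N : ℕ} (hN : k < N) :
    coeff k (comp f h) = coeff k (∑ n ∈ range N, C (coeff n f) * h ^ n) := by
  rw [coeff_comp, map_sum]
  simp only [coeff_C_mul]
  apply Finset.sum_subset
  · intro x hx; simp at hx ⊢; omega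
  · intro x hx hx2
    simp only [Finset.mem_range, not_lt] at hx2
    rw [coeff_pow_vanish h0 x k (by omega), mul_zero]

theorem sum_antidiag_box {M : Type*} [AddCommMonoid M] (W : ℕ → ℕ → M) (k : ℕ)
    (hW : ∀ i j, k < i + j → W i j = 0) {N N' : ℕ} (hN : k < N) (hN' : k < N') :
    ∑ n ∈ range N', ∑ ij ∈ Finset.HasAntidiagonal.antidiagonal n, W ij.1 ij.2
      = ∑ ij ∈ range N ×ˢ range N, W ij.1 ij.2 := by
  have h1 : ∑ n ∈ range N', ∑ ij ∈ Finset.HasAntidiagonal.antidiagonal n, W ij.1 ij.2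
      = ∑ n ∈ range (k+1), ∑ ij ∈ Finset.HasAntidiagonal.antidiagonal n, W ij.1 ij.2 := by
    symm
    apply Finset.sum_subset
    · intro x hx; simp at hx ⊢; omega
    · intro x hx hx2
      simp only [Finset.mem_range, not_lt] at hx2
      apply Finset.sum_eq_zero
      rintro ⟨i, j⟩ hij
      rw [Finset.HasAntidiagonal.mem_antidiagonal] at hij
      exact hW i j (by omega)
  rw [h1, ← Finset.sum_biUnion]
  · apply Finset.sum_subset
    · rintro ⟨i, j⟩ hij
      simp only [Finset.mem_biUnion, Finset.mem_range, Finset.HasAntidiagonal.mem_antidiagonal] at hij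
      obtain ⟨n, hn, hij⟩ := hij
      simp only [Finset.mem_product, Finset.mem_range]
      omega
    · rintro ⟨i, j⟩ _ hij
      apply hW
      by_contra hc
      push_neg at hc
      exact hij (by
        simp only [Finset.mem_biUnion, Finset.mem_range, Finset.HasAntidiagonal.mem_antidiagonal]
        exact ⟨i + j, by omega, rfl⟩)
  · intro a _ b _ hab
    simp only [Function.onFun, Finset.disjoint_left, Finset.HasAntidiagonal.mem_antidiagonal]
    rintro ⟨i, j⟩ h1 h2
    exact hab (by omega)

theorem mul_comp {h : PowerSeries F} (h0 : constantCoeff h = 0) (f g : PowerSeries F) :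
    comp (f * g) h = comp f h * comp g h := by
  ext k
  set N := k + 1 with hNdef
  rw [coeff_comp_stable h0 (f*g) (show k < 2*N by omega), PowerSeries.coeff_mul]
  have hfg : ∀ ab ∈ Finset.HasAntidiagonal.antidiagonal k,
      coeff ab.1 (comp f h) * coeff ab.2 (comp g h)
      = coeff ab.1 (∑ n ∈ range N, C (coeff n f) * h ^ n)
        * coeff ab.2 (∑ n ∈ range N, C (coeff n g) * h ^ n) := by
    rintro ⟨a, b⟩ hab
    rw [Finset.HasAntidiagonal.mem_antidiagonal] at hab
    rw [coeff_comp_stable h0 f (show a < N by omega),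
        coeff_comp_stable h0 g (show b < N by omega)]
  rw [Finset.sum_congr rfl hfg, ← PowerSeries.coeff_mul]
  have lhs : coeff k (∑ n ∈ range (2*N), C (coeff n (f*g)) * h ^ n)
      = ∑ n ∈ range (2*N), ∑ ij ∈ Finset.HasAntidiagonal.antidiagonal n,
          coeff ij.1 f * coeff ij.2 g * coeff k (h ^ (ij.1 + ij.2)) := by
    rw [map_sum]
    apply Finset.sum_congr rfl
    intro n _
    rw [coeff_C_mul, PowerSeries.coeff_mul, Finset.sum_mul]
    apply Finset.sum_congr rfl
    rintro ⟨i, j⟩ hij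
    rw [Finset.HasAntidiagonal.mem_antidiagonal] at hij
    rw [hij]
  have rhs : coeff k ((∑ n ∈ range N, C (coeff n f) * h ^ n)
        * (∑ n ∈ range N, C (coeff n g) * h ^ n))
      = ∑ ij ∈ range N ×ˢ range N,
          coeff ij.1 f * coeff ij.2 g * coeff k (h ^ (ij.1 + ij.2)) := by
    rw [Finset.sum_mul_sum, ← Finset.sum_product', map_sum]
    apply Finset.sum_congr rfl
    rintro ⟨i, j⟩ _
    have : C (coeff i f) * h ^ i * (C (coeff j g) * h ^ j)
        = C (coeff i f) * C (coeff j g) * h ^ (i + j) := by ring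
    rw [this, ← map_mul, coeff_C_mul]
  rw [lhs, rhs]
  exact sum_antidiag_box
    (fun i j => coeff i f * coeff j g * coeff k (h ^ (i + j))) k
    (fun i j hij => by
      show coeff i f * coeff j g * coeff k (h ^ (i + j)) = 0
      rw [coeff_pow_vanish h0 _ k hij, mul_zero]) (by omega) (by omega)

theorem one_comp (h : PowerSeries F) : comp 1 h = 1 := by
  ext k
  rw [coeff_comp, Finset.sum_eq_single 0]
  · simp
  · intro b _ hb
    rw [PowerSeries.coeff_one, if_neg hb]; ring
  · intro hk; simp at hk

theorem pow_comp {h : PowerSeries F} (h0 : constantCoeff h = 0) (f : PowerSeries F) (n : ℕ) :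
    comp (f ^ n) h = (comp f h) ^ n := by
  induction n with
  | zero => simpa using one_comp h
  | succ n ih => rw [pow_succ, mul_comp h0, ih, pow_succ]

theorem comp_assoc {g h : PowerSeries F} (hg : constantCoeff g = 0)
    (hh : constantCoeff h = 0) (f : PowerSeries F) :
    comp (comp f g) h = comp f (comp g h) := by
  ext k
  rw [coeff_comp, coeff_comp]
  have step1 : ∀ m ∈ range (k+1),
      coeff m (comp f g) * coeff k (h ^ m)
      = ∑ n ∈ range (k+1), coeff n f * coeff m (g ^ n) * coeff k (h ^ m) := by
    intro m hm
    rw [Finset.mem_range] at hm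
    rw [coeff_comp, Finset.sum_mul]
    apply Finset.sum_subset
    · intro x hx; simp at hx ⊢; omega
    · intro x _ hx
      simp only [Finset.mem_range, not_lt] at hx
      rw [coeff_pow_vanish hg x m (by omega), mul_zero, zero_mul]
  rw [Finset.sum_congr rfl step1, Finset.sum_comm]
  apply Finset.sum_congr rfl
  intro n _
  have : comp (g ^ n) h = (comp g h) ^ n := pow_comp hh g n
  rw [← this, coeff_comp]
  rw [Finset.mul_sum]
  apply Finset.sum_congr rfl
  intro m _
  ring

theorem coeff_pow_vanish_of {R : PowerSeries F} {k : ℕ}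
    (hR : ∀ i < k, coeff i R = 0) : ∀ j, ∀ m < j * k, coeff m (R ^ j) = 0 := by
  intro j
  induction j with
  | zero => intro m hm; omega
  | succ j ih =>
    intro m hm
    rw [pow_succ]
    rw [add_mul, one_mul] at hm
    exact coeff_mul_vanish ih hR m hm

theorem coeff_pow_congr {H H' : PowerSeries F} {k : ℕ} (hk : 1 ≤ k)
    (h0' : constantCoeff H' = 0) (hlt : ∀ i < k, coeff i H = coeff i H') :
    ∀ n : ℕ, ∀ i ≤ k, coeff i (H ^ n)
      = coeff i (H' ^ n) + (if n = 1 then coeff i (H - H') else 0) := by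
  intro n i hi
  have hR : ∀ i < k, coeff i (H - H') = 0 := by
    intro i hik
    rw [map_sub, hlt i hik, sub_self]
  match n with
  | 0 => simp
  | 1 => simp [map_sub]
  | (m+2) =>
    rw [if_neg (by omega), add_zero]
    have hHe : H = (H - H') + H' := by ring
    rw [hHe, add_pow]
    rw [map_sum, Finset.sum_eq_single 0]
    · simp
    · intro j hj hj0
      have hterm : (H - H') ^ j * H' ^ (m + 2 - j) * ((m+2).choose j : PowerSeries F)
          = ((H - H') ^ j * H' ^ (m + 2 - j)) * C (((m+2).choose j : ℕ) : F) := by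
        rw [← map_natCast (C)]
      rw [hterm, coeff_mul_C]
      have : coeff i ((H - H') ^ j * H' ^ (m + 2 - j)) = 0 := by
        apply coeff_mul_vanish (coeff_pow_vanish_of hR j)
          (fun i hi => coeff_pow_vanish h0' _ i hi) i
        have hj1 : 1 ≤ j := by omega
        rcases Nat.lt_or_ge j (m+3) with hj3 | hj3
        · have : m + 2 - j + j = m + 2 := by omega
          nlinarith [hj1, hi, hk]
        · simp at hj; omega
      rw [this, zero_mul]
    · intro h; simp at h

theorem coeff_comp_congr {g H H' : PowerSeries F} {k : ℕ} (hk : 1 ≤ k)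
    (h0' : constantCoeff H' = 0) (hlt : ∀ i < k, coeff i H = coeff i H') :
    ∀ i ≤ k, coeff i (comp g H)
      = coeff i (comp g H') + coeff 1 g * coeff i (H - H') := by
  intro i hi
  rw [coeff_comp, coeff_comp]
  have : ∀ n ∈ range (i+1),
      coeff n g * coeff i (H ^ n)
      = coeff n g * coeff i (H' ^ n)
        + (if n = 1 then coeff 1 g * coeff i (H - H') else 0) := by
    intro n hn
    rw [coeff_pow_congr hk h0' hlt n i hi, mul_add]
    congr 1
    split
    · subst ‹n = 1›; ring
    · ring
  rw [Finset.sum_congr rfl this, Finset.sum_add_distrib, Finset.sum_ite_eq' (range (i+1)) 1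
    (fun _ => coeff 1 g * coeff i (H - H'))]
  rcases Nat.eq_zero_or_pos i with rfl | hi1
  · have h0 : coeff 0 (H - H') = 0 := by
      rw [map_sub, hlt 0 hk, sub_self]
    simp [h0]
  · rw [if_pos (by simp; omega)]


theorem constantCoeff_iter {f : PowerSeries F} (hf : constantCoeff f = 0) (m : ℕ) :
    constantCoeff (iter f m) = 0 := by
  induction m with
  | zero => simp [iter]
  | succ m ih => rw [iter, constantCoeff_comp]; exact hf

theorem coeff_one_iter (f : PowerSeries F) (m : ℕ) :
    coeff 1 (iter f m) = (coeff 1 f) ^ m := by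
  induction m with
  | zero => simp [iter]
  | succ m ih => rw [iter, coeff_one_comp, ih, pow_succ]; ring

theorem iter_add {f : PowerSeries F} (hf : constantCoeff f = 0) (a b : ℕ) :
    iter f (a + b) = comp (iter f a) (iter f b) := by
  induction a with
  | zero => rw [Nat.zero_add, iter, X_comp (constantCoeff_iter hf b)]
  | succ a ih =>
    have : a + 1 + b = (a + b) + 1 := by omega
    rw [this, iter, ih, ← comp_assoc (constantCoeff_iter hf a) (constantCoeff_iter hf b), iter]

theorem iter_mul {f : PowerSeries F} (hf : constantCoeff f = 0) (m j : ℕ) :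
    iter f (m * j) = iter (iter f m) j := by
  induction j with
  | zero => rw [Nat.mul_zero]; rfl
  | succ j ih =>
    have : m * (j + 1) = m + m * j := by ring
    rw [this, iter_add hf, iter, ih]

theorem iter_X (m : ℕ) : iter (X : PowerSeries F) m = X := by
  induction m with
  | zero => rfl
  | succ m ih => rw [iter, ih, comp_X]

theorem iter_ne_X {F : Type*} [Field F] [CharZero F] {f : PowerSeries F}
    (h0 : constantCoeff f = 0) (h1 : coeff 1 f = 1) (hne : f ≠ X) :
    ∀ m, 0 < m → iter f m ≠ X := by
  have hex : ∃ k, coeff k f ≠ coeff k X := by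
    by_contra hc
    push_neg at hc
    exact hne (PowerSeries.ext hc)
  classical
  set k := Nat.find hex with hkdef
  have hkspec : coeff k f ≠ coeff k X := Nat.find_spec hex
  have hkmin : ∀ i < k, coeff i f = coeff i X := by
    intro i hi
    by_contra hc
    exact absurd (Nat.find_le hc) (Nat.not_le.mpr hi)
  have hk2 : 2 ≤ k := by
    by_contra hc
    interval_cases k
    · exact hkspec (by simpa using h0)
    · exact hkspec (by simpa using h1)
  have hkX : coeff k (X : PowerSeries F) = 0 := by
    rw [PowerSeries.coeff_X, if_neg (by omega)]
  set c := coeff k f with hcdef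
  have hc0 : c ≠ 0 := by rw [hkX] at hkspec; exact hkspec
  have main : ∀ j : ℕ, (∀ i < k, coeff i (iter f j) = coeff i X)
      ∧ coeff k (iter f j) = (j : F) * c := by
    intro j
    induction j with
    | zero => exact ⟨fun i _ => rfl, by simp [iter, hkX]⟩
    | succ j ih =>
      have key := coeff_comp_congr (g := f) (H := iter f j) (H' := X)
        (by omega) PowerSeries.constantCoeff_X ih.1
      constructor
      · intro i hi
        have := key i (by omega)
        rw [comp_X, map_sub, ih.1 i hi, sub_self, mul_zero, add_zero] at this
        rw [iter, this, hkmin i hi]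
      · have := key k (le_refl k)
        rw [comp_X, map_sub, ih.2, hkX, sub_zero, h1, one_mul] at this
        rw [iter, this, Nat.cast_succ]
        ring
  intro m hm hX
  have := (main m).2
  rw [hX, hkX] at this
  have hmc : (m : F) ≠ 0 := Nat.cast_ne_zero.mpr (by omega)
  exact hmc (by
    rcases mul_eq_zero.mp this.symm with h | h
    · exact h
    · exact absurd h hc0)


section Inv
variable {F : Type*} [Field F]

/-- successive approximations to the compositional right inverse of `g`. -/
noncomputable def approx (g : PowerSeries F) : ℕ → PowerSeries F
  | 0 => 0
  | k + 1 => approx g k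
      + C ((coeff 1 g)⁻¹ * (coeff (k+1) X - coeff (k+1) (comp g (approx g k))))
        * X ^ (k + 1)

theorem approx_const (g : PowerSeries F) (k : ℕ) : constantCoeff (approx g k) = 0 := by
  induction k with
  | zero => simp [approx]
  | succ k ih =>
    rw [approx]
    simp [ih]

theorem approx_stable (g : PowerSeries F) (k i : ℕ) (hik : i ≤ k) :
    coeff i (approx g k) = coeff i (approx g i) := by
  induction k with
  | zero =>
    have : i = 0 := by omega
    subst this
    rfl
  | succ k ih =>
    rcases Nat.lt_or_ge i (k+1) with h | h
    · rw [approx, map_add, coeff_C_mul, PowerSeries.coeff_X_pow, if_neg (by omega), mul_zero,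
        add_zero, ih (by omega)]
    · have : i = k + 1 := by omega
      subst this
      rfl

theorem approx_spec {g : PowerSeries F} (hg1 : coeff 1 g ≠ 0) (k : ℕ) :
    ∀ i, 1 ≤ i → i ≤ k → coeff i (comp g (approx g k)) = coeff i X := by
  induction k with
  | zero => intro i h1 h2; omega
  | succ k ih =>
    intro i h1 h2
    have hdiff : ∀ j, coeff j (approx g (k+1) - approx g k)
        = if j = k + 1 then (coeff 1 g)⁻¹ * (coeff (k+1) X - coeff (k+1) (comp g (approx g k))) else 0 := by
      intro j
      rw [map_sub, approx, map_add, coeff_C_mul, PowerSeries.coeff_X_pow]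
      split
      · simp
      · simp
    have key := coeff_comp_congr (g := g) (H := approx g (k+1)) (H' := approx g k)
      (k := k+1) (by omega) (approx_const g k)
      (fun j hj => by
        rw [approx_stable g (k+1) j (by omega), approx_stable g k j (by omega)])
      i h2
    rw [hdiff i] at key
    rcases Nat.lt_or_ge i (k+1) with h | h
    · rw [key, if_neg (by omega), mul_zero, add_zero]
      exact ih i h1 (by omega)
    · have hi : i = k + 1 := by omega
      subst hi
      rw [key, if_pos rfl]
      field_simp
      ring


noncomputable def rightInv (g : PowerSeries F) : PowerSeries F :=
  PowerSeries.mk fun i => coeff i (approx g i)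

theorem rightInv_agree (g : PowerSeries F) (k i : ℕ) (hik : i ≤ k) :
    coeff i (rightInv g) = coeff i (approx g k) := by
  rw [rightInv, PowerSeries.coeff_mk, approx_stable g k i hik]

theorem rightInv_const (g : PowerSeries F) : constantCoeff (rightInv g) = 0 := by
  have := rightInv_agree g 0 0 (le_refl 0)
  rw [← PowerSeries.coeff_zero_eq_constantCoeff, this]
  simp [approx]

theorem rightInv_coeff_one (g : PowerSeries F) :
    coeff 1 (rightInv g) = (coeff 1 g)⁻¹ := by
  rw [rightInv_agree g 1 1 (le_refl 1)]
  show coeff 1 (approx g 0 + _) = _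
  rw [map_add, coeff_C_mul]
  have h1 : coeff 1 (comp g 0) = 0 := by
    rw [coeff_one_comp]
    simp
  simp only [approx]
  rw [h1]
  simp

theorem comp_rightInv {g : PowerSeries F} (hg0 : constantCoeff g = 0)
    (hg1 : coeff 1 g ≠ 0) : comp g (rightInv g) = X := by
  ext i
  rcases Nat.eq_zero_or_pos i with rfl | hi
  · rw [PowerSeries.coeff_zero_eq_constantCoeff, constantCoeff_comp]
    simp [hg0]
  · have key := coeff_comp_congr (g := g) (H := rightInv g) (H' := approx g i)
      (k := i) hi (approx_const g i)
      (fun j hj => rightInv_agree g i j (by omega)) i (le_refl i)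
    rw [map_sub, rightInv_agree g i i (le_refl i), sub_self, mul_zero, add_zero] at key
    rw [key, approx_spec hg1 i i hi (le_refl i)]

theorem exists_inverse {g : PowerSeries F} (hg0 : constantCoeff g = 0)
    (hg1 : coeff 1 g ≠ 0) :
    ∃ gi : PowerSeries F, constantCoeff gi = 0 ∧ coeff 1 gi ≠ 0 ∧
      comp g gi = X ∧ comp gi g = X := by
  set r := rightInv g with hr
  have hr0 : constantCoeff r = 0 := rightInv_const g
  have hr1 : coeff 1 r = (coeff 1 g)⁻¹ := rightInv_coeff_one g
  have hr1' : coeff 1 r ≠ 0 := by rw [hr1]; exact inv_ne_zero hg1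
  have hgr : comp g r = X := comp_rightInv hg0 hg1
  set r' := rightInv r with hr'
  have hr'0 : constantCoeff r' = 0 := rightInv_const r
  have hrr' : comp r r' = X := comp_rightInv hr0 hr1'
  have hgX : comp g X = g := comp_X g
  have : r' = g := by
    have h1 : comp (comp g r) r' = comp g (comp r r') := comp_assoc hr0 hr'0 g
    rw [hgr, X_comp hr'0, hrr', comp_X] at h1
    exact h1
  refine ⟨r, hr0, hr1', hgr, ?_⟩
  rw [show g = r' from this.symm, hrr']

end Inv

theorem comp_CX {q : PowerSeries F} (hq : constantCoeff q = 0) (a : F) :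
    comp (C a * X) q = C a * q := by
  rw [← smul_eq_C_mul, ← smul_eq_C_mul, smul_comp, X_comp hq]

theorem C_mul_comp (a : F) (p q : PowerSeries F) :
    comp (C a * p) q = C a * comp p q := by
  rw [← smul_eq_C_mul, ← smul_eq_C_mul, smul_comp]

theorem coeff_comp_CX (h : PowerSeries F) (a : F) (k : ℕ) :
    coeff k (comp h (C a * X)) = coeff k h * a ^ k := by
  rw [coeff_comp, Finset.sum_eq_single k]
  · rw [mul_pow, ← map_pow, coeff_C_mul, PowerSeries.coeff_X_pow, if_pos rfl, mul_one]
  · intro b _ hb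
    rw [mul_pow, ← map_pow, coeff_C_mul, PowerSeries.coeff_X_pow, if_neg (Ne.symm hb),
      mul_zero, mul_zero]
  · intro hk; simp at hk



section Main
variable {F : Type*} [Field F]

theorem omega_pow_iff {ω : F} {n : ℕ} (hn : 0 < n) (hω1 : ω ^ n = 1)
    (hmin : ∀ m, 0 < m → m < n → ω ^ m ≠ 1) :
    ∀ k : ℕ, ω ^ k = ω ↔ k % n = 1 % n := by
  have hω0 : ω ≠ 0 := by
    intro h
    rw [h, zero_pow (by omega)] at hω1
    exact zero_ne_one hω1
  set u : Fˣ := Units.mk0 ω hω0 with hu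
  have huv : ∀ m : ℕ, ((u ^ m : Fˣ) : F) = ω ^ m := by
    intro m
    rw [Units.val_pow_eq_pow_val]
    rfl
  have hord : orderOf u = n := by
    rw [orderOf_eq_iff hn]
    constructor
    · ext
      rw [huv, hω1, Units.val_one]
    · intro m hm hm0 hc
      apply hmin m hm0 hm
      have := congrArg (Units.val) hc
      rw [huv, Units.val_one] at this
      exact this
  intro k
  have hiff : (u ^ k = u ^ 1) ↔ (k % n = 1 % n) := by
    rw [pow_eq_pow_iff_modEq, hord]
    rfl
  rw [← hiff]
  constructor
  · intro h
    ext
    rw [huv, huv, pow_one, h]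
  · intro h
    have := congrArg Units.val h
    rw [huv, huv, pow_one] at this
    exact this

theorem comm_CX_iff {ω : F} {n : ℕ} (hn : 0 < n) (hω1 : ω ^ n = 1)
    (hmin : ∀ m, 0 < m → m < n → ω ^ m ≠ 1) (h : PowerSeries F) :
    comp h (C ω * X) = C ω * h ↔ ∀ k : ℕ, k % n ≠ 1 % n → coeff k h = 0 := by
  constructor
  · intro hc k hk
    have h1 := congrArg (coeff k) hc
    rw [coeff_comp_CX, coeff_C_mul] at h1
    have hωk : ω ^ k ≠ ω := fun hco => hk ((omega_pow_iff hn hω1 hmin k).mp hco)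
    have h2 : coeff k h * (ω ^ k - ω) = 0 := by rw [mul_sub, h1]; ring
    rcases mul_eq_zero.mp h2 with h3 | h3
    · exact h3
    · exact absurd (sub_eq_zero.mp h3) hωk
  · intro hc
    ext k
    rw [coeff_comp_CX, coeff_C_mul]
    by_cases hk : k % n = 1 % n
    · rw [(omega_pow_iff hn hω1 hmin k).mpr hk]; ring
    · rw [hc k hk]; ring

end Main
end PS

theorem stmt_9 (F : Type*) [Field F] [CharZero F] (f : PowerSeries F) (hf : f ∈ PS.G F)
    (n : ℕ) (hn : 0 < n) (hord : PS.HasOrder f n)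
    (ω : F) (hω : PowerSeries.coeff 1 f = ω)
    (fstar : PowerSeries F)
    (hstar : fstar = (n : F)⁻¹ • ∑ j ∈ Finset.range n, ω ^ (n - 1 - j) • PS.iter f (j + 1))
    (g : PowerSeries F) (hg : g ∈ PS.G F) :
    (∃ ginv ∈ PS.G F, PS.comp g ginv = PowerSeries.X ∧ PS.comp ginv g = PowerSeries.X ∧
        PS.comp (PS.comp g f) ginv = PowerSeries.C ω * PowerSeries.X) ↔
      ∃ h ∈ PS.G F, (∀ k : ℕ, k % n ≠ 1 % n → PowerSeries.coeff k h = 0) ∧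
        g = PS.comp h fstar := by
  obtain ⟨hf0, hf1⟩ := hf
  obtain ⟨hg0, hg1⟩ := hg
  have hω0 : ω ≠ 0 := hω ▸ hf1
  -- iterates of f equal PS.iter
  have hiter1 : PS.iter f 1 = f := by
    show PS.comp f (PS.iter f 0) = f
    show PS.comp f PowerSeries.X = f
    exact PS.comp_X f
  -- ω ^ n = 1
  have hω1 : ω ^ n = 1 := by
    have h1 : PowerSeries.coeff 1 (PS.iter f n) = ω ^ n := by
      rw [PS.coeff_one_iter, hω]
    rw [hord.1] at h1
    simpa using h1.symm
  -- minimality for ω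
  have hmin : ∀ m, 0 < m → m < n → ω ^ m ≠ 1 := by
    intro m hm0 hmn hc
    have hJ : PS.iter f m ≠ PowerSeries.X := hord.2 m hm0 hmn
    have hJ0 : PowerSeries.constantCoeff (PS.iter f m) = 0 := PS.constantCoeff_iter hf0 m
    have hJ1 : PowerSeries.coeff 1 (PS.iter f m) = 1 := by
      rw [PS.coeff_one_iter, hω, hc]
    have hne := PS.iter_ne_X hJ0 hJ1 hJ n hn
    apply hne
    rw [← PS.iter_mul hf0 m n, show m * n = n * m from mul_comm m n,
      PS.iter_mul hf0 n m, hord.1, PS.iter_X]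
  -- fstar basics
  have hfs0 : PowerSeries.constantCoeff fstar = 0 := by
    rw [← PowerSeries.coeff_zero_eq_constantCoeff_apply, hstar, map_smul, map_sum,
      Finset.sum_eq_zero, smul_zero]
    intro j _
    rw [map_smul, PowerSeries.coeff_zero_eq_constantCoeff_apply,
      PS.constantCoeff_iter hf0, smul_zero]
  have hnF : (n : F) ≠ 0 := Nat.cast_ne_zero.mpr (by omega)
  have hfs1 : PowerSeries.coeff 1 fstar = 1 := by
    rw [hstar, map_smul, map_sum]
    have heach : ∀ j ∈ Finset.range n,
        PowerSeries.coeff 1 (ω ^ (n - 1 - j) • PS.iter f (j + 1)) = 1 := by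
      intro j hj
      rw [Finset.mem_range] at hj
      rw [map_smul, PS.coeff_one_iter, hω, smul_eq_mul, ← pow_add,
        show n - 1 - j + (j + 1) = n from by omega, hω1]
    rw [Finset.sum_congr rfl heach, Finset.sum_const, Finset.card_range, nsmul_eq_mul,
      mul_one, smul_eq_mul]
    field_simp
  -- fstar ∘ f = ω fstar
  have hfsf : PS.comp fstar f = PowerSeries.C ω * fstar := by
    have heach : ∀ j ∈ Finset.range n,
        PS.comp (ω ^ (n - 1 - j) • PS.iter f (j + 1)) f
          = ω ^ (n - (j+1)) • PS.iter f ((j + 1) + 1) := by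
      intro j hj
      rw [Finset.mem_range] at hj
      rw [PS.smul_comp, show n - 1 - j = n - (j+1) from by omega]
      congr 1
      rw [PS.iter_add hf0 (j+1) 1, hiter1]
    have reindex : ∑ j ∈ Finset.range n, ω ^ (n - (j+1)) • PS.iter f ((j+1) + 1)
        = ∑ j ∈ Finset.range n, ω ^ (n - j) • PS.iter f (j + 1) := by
      have hA := Finset.sum_range_succ' (fun i => ω ^ (n - i) • PS.iter f (i + 1)) n
      have hB := Finset.sum_range_succ (fun i => ω ^ (n - i) • PS.iter f (i + 1)) n
      have hA0 : ω ^ (n - 0) • PS.iter f (0 + 1) = f := by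
        rw [Nat.sub_zero, hω1, one_smul]
        exact hiter1
      have hAn : ω ^ (n - n) • PS.iter f (n + 1) = f := by
        rw [Nat.sub_self, pow_zero, one_smul, PS.iter, hord.1, PS.comp_X]
      rw [hA0] at hA
      rw [hAn] at hB
      have := hA.symm.trans hB
      exact add_right_cancel this
    rw [hstar, PS.smul_comp, PS.sum_comp, Finset.sum_congr rfl heach, reindex,
      ← PowerSeries.smul_eq_C_mul, smul_comm]
    congr 1
    rw [Finset.smul_sum]
    apply Finset.sum_congr rfl
    intro j hj
    rw [Finset.mem_range] at hj
    rw [smul_smul, ← pow_succ', show (n - 1 - j) + 1 = n - j from by omega]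
  -- inverse of fstar
  obtain ⟨fsinv, hfsi0, hfsi1, hfsfsi, hfsifs⟩ := PS.exists_inverse hfs0 (hfs1 ▸ one_ne_zero)
  have hCX0 : PowerSeries.constantCoeff (PowerSeries.C ω * PowerSeries.X) = 0 := by
    simp
  have cancel_fstar : ∀ u v : PowerSeries F, PS.comp u fstar = PS.comp v fstar → u = v := by
    intro u v huv
    have h1 : PS.comp (PS.comp u fstar) fsinv = PS.comp (PS.comp v fstar) fsinv := by
      rw [huv]
    rw [PS.comp_assoc hfs0 hfsi0, PS.comp_assoc hfs0 hfsi0, hfsfsi, PS.comp_X, PS.comp_X] at h1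
    exact h1
  constructor
  · rintro ⟨ginv, ⟨hgi0, hgi1⟩, hggi, hgig, hconj⟩
    -- derive g ∘ f = ω g
    have hgf : PS.comp g f = PowerSeries.C ω * g := by
      have h1 := congrArg (fun p => PS.comp p g) hconj
      rw [PS.comp_assoc hgi0 hg0, hgig, PS.comp_X, PS.comp_CX hg0] at h1
      exact h1
    refine ⟨PS.comp g fsinv, ⟨?_, ?_⟩, ?_, ?_⟩
    · rw [PS.constantCoeff_comp]; exact hg0
    · rw [PS.coeff_one_comp]; exact mul_ne_zero hg1 hfsi1
    · -- coefficient condition via commutation with ℓ_ω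
      set h := PS.comp g fsinv with hh
      have hh0 : PowerSeries.constantCoeff h = 0 := by
        rw [hh, PS.constantCoeff_comp]; exact hg0
      have hcomm : PS.comp h (PowerSeries.C ω * PowerSeries.X) = PowerSeries.C ω * h := by
        apply cancel_fstar
        rw [PS.comp_assoc hCX0 hfs0, PS.comp_CX hfs0, ← hfsf,
          ← PS.comp_assoc hfs0 hf0, hh, PS.comp_assoc hfsi0 hfs0, hfsifs, PS.comp_X, hgf,
          ← PS.C_mul_comp, PS.comp_assoc hfsi0 hfs0, hfsifs, PS.comp_X]
      exact (PS.comm_CX_iff hn hω1 hmin h).mp hcomm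
    · rw [PS.comp_assoc hfsi0 hfs0, hfsifs, PS.comp_X]
  · rintro ⟨h, ⟨hh0, hh1⟩, hcoeff, hgh⟩
    obtain ⟨ginv, hgi0, hgi1, hggi, hgig⟩ := PS.exists_inverse hg0 hg1
    have hcomm : PS.comp h (PowerSeries.C ω * PowerSeries.X) = PowerSeries.C ω * h :=
      (PS.comm_CX_iff hn hω1 hmin h).mpr hcoeff
    have hgf : PS.comp g f = PowerSeries.C ω * g := by
      rw [hgh, PS.comp_assoc hfs0 hf0, hfsf, ← PS.comp_CX hfs0,
        ← PS.comp_assoc hCX0 hfs0, hcomm, PS.C_mul_comp]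
    refine ⟨ginv, ⟨hgi0, hgi1⟩, hggi, hgig, ?_⟩
    rw [hgf, PS.C_mul_comp, hggi]
end

section
/- Let ω be a primitive n-th root of unity in a field F of characteristic 0 and let f(z) = ωz + Σ_{k≥2} aₖzᵏ have compositional order n. Then for every k > 1 with k ≡ 1 (mod n), the coefficient aₖ is uniquely determined by the preceding coefficients: aₖ = −(ω/n)·P⁽ⁿ⁾ₖ(ω, a₂, …, a_{k−1}), where P⁽ⁿ⁾ₖ is the universal integer polynomial expressing the coefficient of zᵏ in f⁽ⁿ⁾ as aₖω^{n−1}n + P⁽ⁿ⁾ₖ(ω, a₂, …, a_{k−1}) when ω^{k−1} = 1. -/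
open PowerSeries

theorem stmt_12 (F : Type*) [Field F] [CharZero F] (n : ℕ) (hn : 0 < n) (ω : F)
    (hω : IsPrimitiveRoot ω n) (f : PowerSeries F)
    (h0 : PowerSeries.constantCoeff f = 0) (h1 : PowerSeries.coeff 1 f = ω)
    (hord : PS.HasOrder f n) (k : ℕ) (hk1 : 1 < k) (hk : k % n = 1 % n)
    (P : MvPolynomial (Fin k) ℤ)
    (hP : ∀ g : PowerSeries F, PowerSeries.constantCoeff g = 0 →
      (PowerSeries.coeff 1 g) ^ (k - 1) = 1 →
      PowerSeries.coeff k (PS.iter g n) =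
        PowerSeries.coeff k g * (PowerSeries.coeff 1 g) ^ (n - 1) * (n : F) +
          MvPolynomial.aeval (fun i : Fin k => PowerSeries.coeff (i : ℕ) g) P) :
    PowerSeries.coeff k f =
      -(ω / (n : F)) * MvPolynomial.aeval (fun i : Fin k => PowerSeries.coeff (i : ℕ) f) P := by
  have hdvd : n ∣ k - 1 := (Nat.modEq_iff_dvd' (by omega)).mp (Nat.ModEq.symm hk)
  obtain ⟨c, hc⟩ := hdvd
  have hωk : ω ^ (k - 1) = 1 := by rw [hc, pow_mul, hω.pow_eq_one, one_pow]
  have h1' : (PowerSeries.coeff 1 f) ^ (k - 1) = 1 := by rw [h1]; exact hωk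
  have key := hP f h0 h1'
  rw [hord.1, h1] at key
  have hXk : PowerSeries.coeff k (PowerSeries.X : PowerSeries F) = 0 := by
    rw [PowerSeries.coeff_X, if_neg (by omega)]
  rw [hXk] at key
  have hωn : ω ^ n = 1 := hω.pow_eq_one
  have hnn : n - 1 + 1 = n := by omega
  have hne : (n : F) ≠ 0 := Nat.cast_ne_zero.mpr hn.ne'
  have hωne : ω ≠ 0 := hω.ne_zero hn.ne'
  have hmul : PowerSeries.coeff k f * ω ^ (n - 1) * (n : F) =
      -(MvPolynomial.aeval (fun i : Fin k => PowerSeries.coeff (i : ℕ) f) P) := by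
    linear_combination -key
  have hpow : ω ^ (n - 1) * ω = 1 := by rw [← pow_succ, hnn, hωn]
  have h3 : PowerSeries.coeff k f * (n : F) =
      -(MvPolynomial.aeval (fun i : Fin k => PowerSeries.coeff (i : ℕ) f) P) * ω := by
    linear_combination ω * hmul - (PowerSeries.coeff k f * (n : F)) * hpow
  field_simp
  linear_combination h3
end
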